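/- Let A be a unital C*-algebra and {e_{x,a} : x, a ∈ Fin n} a family of projections with ∑_a e_{x,a} = 1 for all x, and e_{x,a} e_{y,a} = 0 for all a whenever x ≠ y. Then ∑_x e_{x,a} = 1 for all a; i.e., the matrix (e_{x,a}) is a quantum permutation (each row and each column is a partition of unity into projections). -/
import Mathlib


/-- If `(e x a)` is an `n × n` matrix of projections in a unital C*-algebra with each row
summing to 1 and column orthogonality, then each column also sums to 1, i.e. `(e x a)`
is a quantum permutation. -/
theorem columns_sum_to_one
    {A : Type*} [NormedRing A] [StarRing A] [CStarRing A] [NormedAlgebra ℂ A]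
    [StarModule ℂ A] [CompleteSpace A]
    {n : ℕ} (e : Fin n → Fin n → A)
    (hidem : ∀ x a, e x a * e x a = e x a)
    (hsa : ∀ x a, star (e x a) = e x a)
    (hrow : ∀ x, ∑ a, e x a = 1)
    (hcol : ∀ x y a, x ≠ y → e x a * e y a = 0) :
    ∀ a, ∑ x, e x a = 1 := by
  letI : CStarAlgebra A := {}
  letI := CStarAlgebra.spectralOrder A
  haveI := CStarAlgebra.spectralOrderedRing A
  set p : Fin n → A := fun a => ∑ x, e x a with hp
  have hpsq : ∀ a, p a * p a = p a := by
    intro a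
    simp only [hp, Finset.sum_mul, Finset.mul_sum]
    refine Finset.sum_congr rfl fun x _ => ?_
    rw [Finset.sum_eq_single x]
    · exact hidem x a
    · intro y _ hy; exact hcol y x a hy
    · simp
  have hpsa : ∀ a, star (p a) = p a := by
    intro a; simp only [hp, star_sum]
    exact Finset.sum_congr rfl fun x _ => hsa x a
  set q : Fin n → A := fun a => 1 - p a with hq
  have hqsq : ∀ a, q a * q a = q a := by
    intro a
    simp only [hq, mul_sub, sub_mul, one_mul, mul_one, hpsq a]
    abel
  have hqsa : ∀ a, star (q a) = q a := by
    intro a; simp [hq, hpsa a]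
  have hqnn : ∀ a, (0:A) ≤ q a := by
    intro a
    calc (0:A) ≤ star (q a) * q a := star_mul_self_nonneg _
    _ = q a := by rw [hqsa a, hqsq a]
  have hsum : ∑ a, q a = 0 := by
    have h1 : ∑ a, p a = ∑ a : Fin n, (1:A) := by
      rw [Finset.sum_comm]
      exact Finset.sum_congr rfl fun x _ => hrow x
    simp only [hq, Finset.sum_sub_distrib, h1, sub_self]
  have hz : ∀ a ∈ Finset.univ, q a = 0 :=
    (Finset.sum_eq_zero_iff_of_nonneg fun a _ => hqnn a).mp hsum
  intro a
  have := hz a (Finset.mem_univ a)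
  have h1 : (1:A) - p a = 0 := this
  exact (sub_eq_zero.mp h1).symm
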